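/- Let {A_n}_n be a matrix-sequence with A_n ∈ ℂ^{d_n×d_n'}, where d_n and d_n' are monotonically increasing integer sequences, and let {{B_{n,t}}_n}_{t>0} be an a.c.s. for {A_n}_n. Assume that for every t > 0 and every continuous F : ℝ → ℝ with compact support the limit lim_{n→∞} (1/(d_n ∧ d_n')) Σ_{j=1}^{d_n ∧ d_n'} F(σ_j(B_{n,t})) = α_t(F) exists, and that for every such F the limit lim_{t→∞} α_t(F) = α(F) exists. Then for every continuous F : ℝ → ℝ with compact support, lim_{n→∞} (1/(d_n ∧ d_n')) Σ_{j=1}^{d_n ∧ d_n'} F(σ_j(A_n)) = α(F). -/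

import Mathlib

open Filter MeasureTheory Matrix Set
open scoped Topology ENNReal

noncomputable def eigDesc {n : ℕ} (A : Matrix (Fin n) (Fin n) ℂ) (hA : A.IsHermitian) :
    Fin n → ℝ :=
  fun j => (hA.eigenvalues ∘ Tuple.sort hA.eigenvalues) j.rev

noncomputable def singVals {m n : ℕ} (A : Matrix (Fin m) (Fin n) ℂ) :
    Fin (min m n) → ℝ :=
  fun j => Real.sqrt (eigDesc (Aᴴ * A) (Matrix.isHermitian_conjTranspose_mul_self A)
    (Fin.castLE (min_le_right m n) j))

noncomputable def specNorm {m n : ℕ} (A : Matrix (Fin m) (Fin n) ℂ) : ℝ :=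
  ‖LinearMap.toContinuousLinearMap (Matrix.toEuclideanLin A)‖
def IsACS (d d' : ℕ → ℕ)
    (A : (n : ℕ) → Matrix (Fin (d n)) (Fin (d' n)) ℂ)
    (B : ℝ → (n : ℕ) → Matrix (Fin (d n)) (Fin (d' n)) ℂ) : Prop :=
  ∃ (nt : ℝ → ℕ) (c ω : ℝ → ℝ),
    Tendsto c atTop (𝓝 0) ∧ Tendsto ω atTop (𝓝 0) ∧
    ∀ t : ℝ, 0 < t → ∀ n : ℕ, nt t < n →
      ∃ R N : Matrix (Fin (d n)) (Fin (d' n)) ℂ,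
        A n = B t n + R + N ∧
        (R.rank : ℝ) ≤ c t * ((min (d n) (d' n) : ℕ) : ℝ) ∧
        specNorm N ≤ ω t

section helpers
variable {n m : ℕ} {M : Matrix (Fin n) (Fin n) ℂ}

local notation "⟪" x ", " y "⟫" => @inner ℂ _ _ x y

lemma eigDesc_antitone (hM : M.IsHermitian) : Antitone (eigDesc M hM) := by
  intro i j hij
  exact Tuple.monotone_sort hM.eigenvalues (Fin.rev_le_rev.mpr hij)

noncomputable def descBasis (hM : M.IsHermitian) :
    OrthonormalBasis (Fin n) ℂ (EuclideanSpace ℂ (Fin n)) :=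
  hM.eigenvectorBasis.reindex (Fin.revPerm.trans (Tuple.sort hM.eigenvalues)).symm

lemma descBasis_apply (hM : M.IsHermitian) (j : Fin n) :
    descBasis hM j = hM.eigenvectorBasis (Tuple.sort hM.eigenvalues j.rev) := by
  simp [descBasis, OrthonormalBasis.reindex_apply]

lemma toEuclideanLin_descBasis (hM : M.IsHermitian) (j : Fin n) :
    Matrix.toEuclideanLin M (descBasis hM j) = eigDesc M hM j • descBasis hM j := by
  rw [descBasis_apply]
  have h := hM.mulVec_eigenvectorBasis (Tuple.sort hM.eigenvalues j.rev)
  apply (WithLp.equiv 2 _).injective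
  simp only [WithLp.equiv_apply, Matrix.ofLp_toEuclideanLin_apply]
  rw [h]
  rfl

lemma repr_toEuclideanLin (hM : M.IsHermitian) (x : EuclideanSpace ℂ (Fin n)) (i : Fin n) :
    (descBasis hM).repr (Matrix.toEuclideanLin M x) i
      = (eigDesc M hM i : ℂ) * (descBasis hM).repr x i := by
  rw [OrthonormalBasis.repr_apply_apply, OrthonormalBasis.repr_apply_apply]
  have hsymm := (Matrix.isHermitian_iff_isSymmetric.mp hM)
  rw [← hsymm (descBasis hM i) x, toEuclideanLin_descBasis hM i]
  rw [RCLike.real_smul_eq_coe_smul (K := ℂ), inner_smul_left]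
  simp [Complex.conj_ofReal]

lemma inner_toEuclideanLin_self (hM : M.IsHermitian) (x : EuclideanSpace ℂ (Fin n)) :
    ⟪x, Matrix.toEuclideanLin M x⟫
      = ((∑ i, eigDesc M hM i * ‖(descBasis hM).repr x i‖^2 : ℝ) : ℂ) := by
  rw [← LinearIsometryEquiv.inner_map_map (descBasis hM).repr]
  rw [PiLp.inner_apply]
  push_cast
  refine Finset.sum_congr rfl fun i _ => ?_
  rw [repr_toEuclideanLin hM]
  simp only [RCLike.inner_apply]
  rw [show (eigDesc M hM i : ℂ) * (descBasis hM).repr x i * (starRingEnd ℂ) ((descBasis hM).repr x i)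
      = (eigDesc M hM i : ℂ) * ((starRingEnd ℂ) ((descBasis hM).repr x i) * (descBasis hM).repr x i) by ring]
  rw [RCLike.conj_mul]
  rfl

lemma norm_sq_repr (b : OrthonormalBasis (Fin n) ℂ (EuclideanSpace ℂ (Fin n)))
    (x : EuclideanSpace ℂ (Fin n)) : ‖x‖^2 = ∑ i, ‖b.repr x i‖^2 := by
  rw [← b.repr.norm_map x, EuclideanSpace.norm_eq, Real.sq_sqrt (by positivity)]

/-- squared norm of `X x` in terms of the eigen-decomposition of `XᴴX` -/
lemma norm_toEuclideanLin_sq (X : Matrix (Fin m) (Fin n) ℂ) (x : EuclideanSpace ℂ (Fin n)) :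
    ‖Matrix.toEuclideanLin X x‖^2
      = ∑ i, eigDesc (Xᴴ * X) (Matrix.isHermitian_conjTranspose_mul_self X) i
          * ‖(descBasis (Matrix.isHermitian_conjTranspose_mul_self X)).repr x i‖^2 := by
  have hmul : Matrix.toEuclideanLin (Xᴴ * X)
      = (Matrix.toEuclideanLin Xᴴ).comp (Matrix.toEuclideanLin X) := by
    simp only [Matrix.toEuclideanLin_eq_toLin]
    exact Matrix.toLin_mul (PiLp.basisFun 2 ℂ (Fin n)) (PiLp.basisFun 2 ℂ (Fin m))
      (PiLp.basisFun 2 ℂ (Fin n)) Xᴴ X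
  have h1 : ⟪x, Matrix.toEuclideanLin (Xᴴ * X) x⟫
      = ⟪Matrix.toEuclideanLin X x, Matrix.toEuclideanLin X x⟫ := by
    rw [hmul]
    simp only [LinearMap.comp_apply]
    rw [Matrix.toEuclideanLin_conjTranspose_eq_adjoint, LinearMap.adjoint_inner_right]
  have h2 := inner_toEuclideanLin_self (Matrix.isHermitian_conjTranspose_mul_self X) x
  rw [h1, inner_self_eq_norm_sq_to_K] at h2
  have h3 := congrArg Complex.re h2
  simpa [← Complex.ofReal_pow] using h3

lemma eigDesc_conjTranspose_mul_self_nonneg (X : Matrix (Fin m) (Fin n) ℂ) (i : Fin n) :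
    0 ≤ eigDesc (Xᴴ * X) (Matrix.isHermitian_conjTranspose_mul_self X) i := by
  open scoped ComplexOrder in
  exact (Matrix.posSemidef_conjTranspose_mul_self X).eigenvalues_nonneg _

lemma mem_span_orthonormal_iff (b : OrthonormalBasis (Fin n) ℂ (EuclideanSpace ℂ (Fin n)))
    {S : Finset (Fin n)} {x : EuclideanSpace ℂ (Fin n)} :
    x ∈ Submodule.span ℂ (⇑b '' ↑S) ↔ ∀ i ∉ S, b.repr x i = 0 := by
  rw [← b.coe_toBasis, Module.Basis.mem_span_image, Finsupp.support_subset_iff]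
  simp [OrthonormalBasis.coe_toBasis_repr_apply]

lemma finrank_span_orthonormal (b : OrthonormalBasis (Fin n) ℂ (EuclideanSpace ℂ (Fin n)))
    (S : Finset (Fin n)) :
    Module.finrank ℂ (Submodule.span ℂ (⇑b '' ↑S)) = S.card := by
  have himg : ⇑b '' ↑S = Set.range (⇑b ∘ (Subtype.val : {i // i ∈ S} → Fin n)) := by
    ext y; simp
  rw [himg, finrank_span_eq_card ((b.orthonormal.linearIndependent).comp _ Subtype.val_injective)]
  simp

lemma exists_ne_zero_mem_inf {U W : Submodule ℂ (EuclideanSpace ℂ (Fin n))}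
    (h : n < Module.finrank ℂ U + Module.finrank ℂ W) :
    ∃ x, x ∈ U ⊓ W ∧ x ≠ 0 := by
  have hne : U ⊓ W ≠ ⊥ := by
    intro hbot
    have := Submodule.finrank_sup_add_finrank_inf_eq U W
    rw [hbot, finrank_bot] at this
    have hle : Module.finrank ℂ ↥(U ⊔ W) ≤ n := by
      simpa [finrank_euclideanSpace] using Submodule.finrank_le (U ⊔ W)
    omega
  obtain ⟨x, hx, hx0⟩ := Submodule.exists_mem_ne_zero_of_ne_bot hne
  exact ⟨x, hx, hx0⟩

end helpers

section perturb
variable {m n : ℕ}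

lemma norm_apply_le_of_repr (X : Matrix (Fin m) (Fin n) ℂ) (a : ℝ) (ha : 0 ≤ a)
    (x : EuclideanSpace ℂ (Fin n))
    (hx : ∀ i, (descBasis (Matrix.isHermitian_conjTranspose_mul_self X)).repr x i ≠ 0 →
      eigDesc (Xᴴ * X) (Matrix.isHermitian_conjTranspose_mul_self X) i ≤ a ^ 2) :
    ‖Matrix.toEuclideanLin X x‖ ≤ a * ‖x‖ := by
  have hsq : ‖Matrix.toEuclideanLin X x‖^2 ≤ a^2 * ‖x‖^2 := by
    rw [norm_toEuclideanLin_sq, norm_sq_repr (descBasis (Matrix.isHermitian_conjTranspose_mul_self X)),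
      Finset.mul_sum]
    refine Finset.sum_le_sum fun i _ => ?_
    by_cases h : (descBasis (Matrix.isHermitian_conjTranspose_mul_self X)).repr x i = 0
    · simp [h]
    · exact mul_le_mul_of_nonneg_right (hx i h) (by positivity)
  calc ‖Matrix.toEuclideanLin X x‖ = Real.sqrt (‖Matrix.toEuclideanLin X x‖^2) :=
        (Real.sqrt_sq (norm_nonneg _)).symm
    _ ≤ Real.sqrt (a^2 * ‖x‖^2) := Real.sqrt_le_sqrt hsq
    _ = a * ‖x‖ := by
        rw [Real.sqrt_mul (by positivity), Real.sqrt_sq ha, Real.sqrt_sq (norm_nonneg _)]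

lemma le_norm_apply_of_repr (X : Matrix (Fin m) (Fin n) ℂ) (a : ℝ) (ha : 0 ≤ a)
    (x : EuclideanSpace ℂ (Fin n))
    (hx : ∀ i, (descBasis (Matrix.isHermitian_conjTranspose_mul_self X)).repr x i ≠ 0 →
      a ^ 2 ≤ eigDesc (Xᴴ * X) (Matrix.isHermitian_conjTranspose_mul_self X) i) :
    a * ‖x‖ ≤ ‖Matrix.toEuclideanLin X x‖ := by
  have hsq : a^2 * ‖x‖^2 ≤ ‖Matrix.toEuclideanLin X x‖^2 := by
    rw [norm_toEuclideanLin_sq, norm_sq_repr (descBasis (Matrix.isHermitian_conjTranspose_mul_self X)),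
      Finset.mul_sum]
    refine Finset.sum_le_sum fun i _ => ?_
    by_cases h : (descBasis (Matrix.isHermitian_conjTranspose_mul_self X)).repr x i = 0
    · simp [h]
    · exact mul_le_mul_of_nonneg_right (hx i h) (by positivity)
  calc a * ‖x‖ = Real.sqrt (a^2 * ‖x‖^2) := by
        rw [Real.sqrt_mul (by positivity), Real.sqrt_sq ha, Real.sqrt_sq (norm_nonneg _)]
    _ ≤ Real.sqrt (‖Matrix.toEuclideanLin X x‖^2) := Real.sqrt_le_sqrt hsq
    _ = ‖Matrix.toEuclideanLin X x‖ := Real.sqrt_sq (norm_nonneg _)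

lemma singVals_nonneg (X : Matrix (Fin m) (Fin n) ℂ) (j : Fin (min m n)) :
    0 ≤ singVals X j := Real.sqrt_nonneg _

lemma singVals_sq (X : Matrix (Fin m) (Fin n) ℂ) (j : Fin (min m n)) :
    singVals X j ^ 2
      = eigDesc (Xᴴ * X) (Matrix.isHermitian_conjTranspose_mul_self X)
          (Fin.castLE (min_le_right m n) j) :=
  Real.sq_sqrt (eigDesc_conjTranspose_mul_self_nonneg X _)

lemma specNorm_nonneg (X : Matrix (Fin m) (Fin n) ℂ) : 0 ≤ specNorm X := norm_nonneg _

lemma specNorm_neg (X : Matrix (Fin m) (Fin n) ℂ) : specNorm (-X) = specNorm X := by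
  unfold specNorm
  rw [map_neg, map_neg, norm_neg]

lemma norm_toEuclideanLin_le (X : Matrix (Fin m) (Fin n) ℂ) (x : EuclideanSpace ℂ (Fin n)) :
    ‖Matrix.toEuclideanLin X x‖ ≤ specNorm X * ‖x‖ := by
  have := (LinearMap.toContinuousLinearMap (Matrix.toEuclideanLin X)).le_opNorm x
  simpa [specNorm] using this

/-- Key perturbation bound for singular values. -/
lemma singVals_add_le (X R N : Matrix (Fin m) (Fin n) ℂ) (j k : Fin (min m n))
    (hjk : (j : ℕ) + R.rank ≤ (k : ℕ)) :
    singVals (X + R + N) k ≤ singVals X j + specNorm N := by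
  set A := X + R + N with hA
  set hMA := Matrix.isHermitian_conjTranspose_mul_self A
  set hMX := Matrix.isHermitian_conjTranspose_mul_self X
  set kn : Fin n := Fin.castLE (min_le_right m n) k
  set jn : Fin n := Fin.castLE (min_le_right m n) j
  set U : Submodule ℂ (EuclideanSpace ℂ (Fin n)) :=
    Submodule.span ℂ (⇑(descBasis hMA) '' ↑(Finset.Iic kn))
  set W : Submodule ℂ (EuclideanSpace ℂ (Fin n)) :=
    Submodule.span ℂ (⇑(descBasis hMX) '' ↑(Finset.Ici jn))
  set K : Submodule ℂ (EuclideanSpace ℂ (Fin n)) := LinearMap.ker (Matrix.toEuclideanLin R)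
  have hU : Module.finrank ℂ U = (kn : ℕ) + 1 := by
    rw [finrank_span_orthonormal, Fin.card_Iic]
  have hW : Module.finrank ℂ W = n - (jn : ℕ) := by
    rw [finrank_span_orthonormal, Fin.card_Ici]
  have hK : Module.finrank ℂ K + R.rank = n := by
    have hrank : R.rank = Module.finrank ℂ (LinearMap.range (Matrix.toEuclideanLin R)) := by
      rw [Matrix.rank_eq_finrank_range_toLin R (PiLp.basisFun 2 ℂ (Fin m))
        (PiLp.basisFun 2 ℂ (Fin n)), Matrix.toEuclideanLin_eq_toLin]
    rw [hrank, add_comm]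
    simpa [finrank_euclideanSpace] using
      LinearMap.finrank_range_add_finrank_ker (Matrix.toEuclideanLin R)
  -- dimension count
  have hWK : Module.finrank ℂ W + Module.finrank ℂ K
      ≤ Module.finrank ℂ (W ⊓ K : Submodule ℂ (EuclideanSpace ℂ (Fin n))) + n := by
    rw [← Submodule.finrank_sup_add_finrank_inf_eq W K]
    have : Module.finrank ℂ ↥(W ⊔ K) ≤ n := by
      simpa [finrank_euclideanSpace] using Submodule.finrank_le (W ⊔ K)
    omega
  have hdim : n < Module.finrank ℂ U
      + Module.finrank ℂ (W ⊓ K : Submodule ℂ (EuclideanSpace ℂ (Fin n))) := by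
    have hkn : (kn : ℕ) = (k : ℕ) := rfl
    have hjn : (jn : ℕ) = (j : ℕ) := rfl
    have hkn' : (k : ℕ) < n := lt_of_lt_of_le k.isLt (min_le_right m n)
    omega
  obtain ⟨x, hx, hx0⟩ := exists_ne_zero_mem_inf hdim
  have hxU : x ∈ U := hx.1
  have hxW : x ∈ W := hx.2.1
  have hxK : x ∈ K := hx.2.2
  -- lower bound on A side
  have hlow : singVals A k * ‖x‖ ≤ ‖Matrix.toEuclideanLin A x‖ := by
    refine le_norm_apply_of_repr A _ (singVals_nonneg A k) x fun i hi => ?_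
    rw [singVals_sq]
    have hiS : i ∈ Finset.Iic kn := by
      by_contra hmem
      exact hi ((mem_span_orthonormal_iff (descBasis hMA)).mp hxU i hmem)
    exact eigDesc_antitone hMA (Finset.mem_Iic.mp hiS)
  -- upper bound on X side
  have hup : ‖Matrix.toEuclideanLin X x‖ ≤ singVals X j * ‖x‖ := by
    refine norm_apply_le_of_repr X _ (singVals_nonneg X j) x fun i hi => ?_
    rw [singVals_sq]
    have hiS : i ∈ Finset.Ici jn := by
      by_contra hmem
      exact hi ((mem_span_orthonormal_iff (descBasis hMX)).mp hxW i hmem)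
    exact eigDesc_antitone hMX (Finset.mem_Ici.mp hiS)
  have hker : Matrix.toEuclideanLin R x = 0 := hxK
  have hsplit : Matrix.toEuclideanLin A x
      = Matrix.toEuclideanLin X x + Matrix.toEuclideanLin N x := by
    rw [hA]
    simp [map_add, LinearMap.add_apply, hker]
  have hchain : singVals A k * ‖x‖ ≤ (singVals X j + specNorm N) * ‖x‖ := by
    calc singVals A k * ‖x‖ ≤ ‖Matrix.toEuclideanLin A x‖ := hlow
      _ ≤ ‖Matrix.toEuclideanLin X x‖ + ‖Matrix.toEuclideanLin N x‖ := by
          rw [hsplit]; exact norm_add_le _ _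
      _ ≤ singVals X j * ‖x‖ + specNorm N * ‖x‖ :=
          add_le_add hup (norm_toEuclideanLin_le N x)
      _ = (singVals X j + specNorm N) * ‖x‖ := by ring
  exact le_of_mul_le_mul_right hchain (norm_pos_iff.mpr hx0)

end perturb

section analysis
variable {p q : ℕ}

lemma singVals_antitone (X : Matrix (Fin p) (Fin q) ℂ) : Antitone (singVals X) := by
  intro i j hij
  exact Real.sqrt_le_sqrt (eigDesc_antitone _ (by exact_mod_cast hij))

lemma rank_neg' (R : Matrix (Fin p) (Fin q) ℂ) : (-R).rank = R.rank := by
  unfold Matrix.rank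
  have h : (-R).mulVecLin = -(R.mulVecLin) := by
    ext x
    simp [Matrix.mulVecLin_apply, Matrix.neg_mulVec]
  rw [h, LinearMap.range_neg]

/-- The capped singular value sequence, extended by `T` to the left and `0` to the right. -/
noncomputable def capSeq (X : Matrix (Fin p) (Fin q) ℂ) (T : ℝ) (z : ℤ) : ℝ :=
  if z < 0 then T
  else if h : z.toNat < min p q then min (singVals X ⟨z.toNat, h⟩) T else 0

lemma capSeq_nonneg (X : Matrix (Fin p) (Fin q) ℂ) {T : ℝ} (hT : 0 ≤ T) (z : ℤ) :
    0 ≤ capSeq X T z := by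
  unfold capSeq
  split_ifs with h1 h2
  · exact hT
  · exact le_min (singVals_nonneg X _) hT
  · exact le_refl 0

lemma capSeq_le (X : Matrix (Fin p) (Fin q) ℂ) {T : ℝ} (hT : 0 ≤ T) (z : ℤ) :
    capSeq X T z ≤ T := by
  unfold capSeq
  split_ifs with h1 h2
  · exact le_refl T
  · exact min_le_right _ _
  · exact hT

lemma capSeq_antitone (X : Matrix (Fin p) (Fin q) ℂ) {T : ℝ} (hT : 0 ≤ T) :
    Antitone (capSeq X T) := by
  intro z w hzw
  by_cases hw : w < 0
  · have hz : z < 0 := lt_of_le_of_lt hzw hw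
    simp [capSeq, hz, hw]
  · have h2 : capSeq X T w ≤ min T (capSeq X T z) ∨ capSeq X T w ≤ capSeq X T z := by
      by_cases hz : z < 0
      · left
        simp only [capSeq, if_neg hw, if_pos hz]
        exact le_min (by
          split_ifs with h
          · exact min_le_right _ _
          · exact hT) (by
          split_ifs with h
          · exact min_le_right _ _
          · exact hT)
      · right
        simp only [capSeq, if_neg hw, if_neg hz]
        by_cases hwm : w.toNat < min p q
        · have hzm : z.toNat < min p q := by omega
          rw [dif_pos hwm, dif_pos hzm]
          refine min_le_min ?_ (le_refl T)
          exact singVals_antitone X (Fin.mk_le_mk.mpr (by omega))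
        · rw [dif_neg hwm]
          split_ifs with h
          · exact le_min (singVals_nonneg X _) hT
          · exact le_refl 0
    rcases h2 with h | h
    · calc capSeq X T w ≤ min T (capSeq X T z) := h
        _ ≤ capSeq X T z := min_le_right _ _
    · exact h

lemma capSeq_eq_of (X : Matrix (Fin p) (Fin q) ℂ) (T : ℝ) {i : ℕ} (h : i < min p q) :
    capSeq X T (i : ℤ) = min (singVals X ⟨i, h⟩) T := by
  unfold capSeq
  rw [if_neg (by omega), dif_pos (by simpa using h)]
  congr 1

/-- Core estimate: sums of `F` over singular values of `B+R+N` vs `B`. -/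
lemma sum_F_singVals_diff_le (Bm Rm Nm : Matrix (Fin p) (Fin q) ℂ)
    (F : ℝ → ℝ) (K T δ₀ ε' ω0 : ℝ)
    (hK : ∀ x, |F x| ≤ K) (hT : 0 < T) (hTF : ∀ x, T ≤ x → F x = 0)
    (hδ₀ : 0 < δ₀) (hε' : 0 ≤ ε')
    (hmod : ∀ x y : ℝ, |x - y| ≤ 2 * δ₀ → |F x - F y| ≤ ε')
    (hN : specNorm Nm ≤ ω0) (hω0 : ω0 ≤ δ₀) :
    |∑ j, F (singVals (Bm + Rm + Nm) j) - ∑ j, F (singVals Bm j)|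
      ≤ ((min p q : ℕ) : ℝ) * ε' + (2 * K / δ₀) * (2 * (Rm.rank : ℝ) * T) := by
  classical
  set r : ℕ := Rm.rank with hr
  set A : Matrix (Fin p) (Fin q) ℂ := Bm + Rm + Nm with hAdef
  set s : ℤ → ℝ := capSeq Bm T with hs
  have hω0nn : 0 ≤ ω0 := le_trans (specNorm_nonneg Nm) hN
  have hKnn : 0 ≤ K := le_trans (abs_nonneg _) (hK 0)
  have hδnn : ∀ j : Fin (min p q),
      0 ≤ s (((j : ℕ) : ℤ) - (r : ℤ)) - s (((j : ℕ) : ℤ) + (r : ℤ)) := fun j =>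
    sub_nonneg.mpr (capSeq_antitone Bm hT.le
      (show (((j : ℕ) : ℤ) - (r : ℤ)) ≤ (((j : ℕ) : ℤ) + (r : ℤ)) by omega))
  -- (c1) per-index closeness
  have hclose : ∀ j : Fin (min p q),
      |min (singVals A j) T - min (singVals Bm j) T|
        ≤ ω0 + (s (((j : ℕ) : ℤ) - (r : ℤ)) - s (((j : ℕ) : ℤ) + (r : ℤ))) := by
    intro j
    have h1 : min (singVals A j) T ≤ s (((j : ℕ) : ℤ) - (r : ℤ)) + ω0 := by
      by_cases hjr : ((j : ℕ) : ℤ) - (r : ℤ) < 0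
      · rw [hs, capSeq, if_pos hjr]
        exact le_add_of_le_of_nonneg (min_le_right _ _) hω0nn
      · have hrj : r ≤ (j : ℕ) := by omega
        have hlt : (j : ℕ) - r < min p q := lt_of_le_of_lt (Nat.sub_le _ _) j.isLt
        have hsv : singVals A j ≤ singVals Bm ⟨(j : ℕ) - r, hlt⟩ + specNorm Nm :=
          singVals_add_le Bm Rm Nm ⟨(j : ℕ) - r, hlt⟩ j
            (by show (j : ℕ) - r + Rm.rank ≤ (j : ℕ); omega)
        have hcast : ((j : ℕ) : ℤ) - (r : ℤ) = (((j : ℕ) - r : ℕ) : ℤ) := by omega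
        have hseq : s (((j : ℕ) : ℤ) - (r : ℤ))
            = min (singVals Bm ⟨(j : ℕ) - r, hlt⟩) T := by
          rw [hs, hcast]; exact capSeq_eq_of Bm T hlt
        rw [hseq]
        calc min (singVals A j) T
            ≤ min (singVals Bm ⟨(j : ℕ) - r, hlt⟩ + ω0) (T + ω0) :=
              min_le_min (hsv.trans (add_le_add_right hN _)) (le_add_of_nonneg_right hω0nn)
          _ = min (singVals Bm ⟨(j : ℕ) - r, hlt⟩) T + ω0 := min_add_add_right _ _ _
    have h2 : s (((j : ℕ) : ℤ) + (r : ℤ)) ≤ min (singVals A j) T + ω0 := by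
      by_cases hjr : (j : ℕ) + r < min p q
      · have hBm : A + (-Rm) + (-Nm) = Bm := by rw [hAdef]; abel
        have hsv : singVals Bm ⟨(j : ℕ) + r, hjr⟩ ≤ singVals A j + specNorm Nm := by
          have := singVals_add_le A (-Rm) (-Nm) j ⟨(j : ℕ) + r, hjr⟩
            (by rw [rank_neg'])
          rwa [hBm, specNorm_neg] at this
        have hcast : ((j : ℕ) : ℤ) + (r : ℤ) = (((j : ℕ) + r : ℕ) : ℤ) := by omega
        have hseq : s (((j : ℕ) : ℤ) + (r : ℤ))
            = min (singVals Bm ⟨(j : ℕ) + r, hjr⟩) T := by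
          rw [hs, hcast]; exact capSeq_eq_of Bm T hjr
        rw [hseq]
        calc min (singVals Bm ⟨(j : ℕ) + r, hjr⟩) T
            ≤ min (singVals A j + ω0) (T + ω0) :=
              min_le_min (hsv.trans (add_le_add_right hN _)) (le_add_of_nonneg_right hω0nn)
          _ = min (singVals A j) T + ω0 := min_add_add_right _ _ _
      · rw [hs, capSeq, if_neg (by omega), dif_neg (by omega)]
        exact add_nonneg (le_min (singVals_nonneg A j) hT.le) hω0nn
    have hmid : s ((j : ℕ) : ℤ) = min (singVals Bm j) T := by
      rw [hs]
      have := capSeq_eq_of Bm T j.isLt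
      simpa using this
    have h3 : s (((j : ℕ) : ℤ) + (r : ℤ)) ≤ min (singVals Bm j) T := by
      rw [← hmid]; exact capSeq_antitone Bm hT.le (by omega)
    have h4 : min (singVals Bm j) T ≤ s (((j : ℕ) : ℤ) - (r : ℤ)) := by
      rw [← hmid]; exact capSeq_antitone Bm hT.le (by omega)
    rw [abs_sub_le_iff]
    constructor
    · linarith
    · linarith
  -- (c3) per-index F bound
  have hFbound : ∀ j : Fin (min p q),
      |F (singVals A j) - F (singVals Bm j)|
        ≤ ε' + (2 * K / δ₀) * (s (((j : ℕ) : ℤ) - (r : ℤ)) - s (((j : ℕ) : ℤ) + (r : ℤ))) := by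
    intro j
    have hFA : F (singVals A j) = F (min (singVals A j) T) := by
      rcases le_total (singVals A j) T with h | h
      · rw [min_eq_left h]
      · rw [min_eq_right h, hTF _ h, hTF _ (le_refl T)]
    have hFB : F (singVals Bm j) = F (min (singVals Bm j) T) := by
      rcases le_total (singVals Bm j) T with h | h
      · rw [min_eq_left h]
      · rw [min_eq_right h, hTF _ h, hTF _ (le_refl T)]
    rw [hFA, hFB]
    by_cases hcase : s (((j : ℕ) : ℤ) - (r : ℤ)) - s (((j : ℕ) : ℤ) + (r : ℤ)) ≤ δ₀
    · have habs : |min (singVals A j) T - min (singVals Bm j) T| ≤ 2 * δ₀ := by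
        have := hclose j
        linarith
      have hF := hmod _ _ habs
      have hpos : 0 ≤ (2 * K / δ₀) * (s (((j : ℕ) : ℤ) - (r : ℤ)) - s (((j : ℕ) : ℤ) + (r : ℤ))) :=
        mul_nonneg (by positivity) (hδnn j)
      linarith
    · push_neg at hcase
      have h2K : |F (min (singVals A j) T) - F (min (singVals Bm j) T)| ≤ 2 * K := by
        calc |F (min (singVals A j) T) - F (min (singVals Bm j) T)|
            ≤ |F (min (singVals A j) T)| + |F (min (singVals Bm j) T)| := abs_sub _ _
          _ ≤ K + K := add_le_add (hK _) (hK _)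
          _ = 2 * K := by ring
      calc |F (min (singVals A j) T) - F (min (singVals Bm j) T)| ≤ 2 * K := h2K
        _ = (2 * K / δ₀) * δ₀ := by field_simp
        _ ≤ (2 * K / δ₀) * (s (((j : ℕ) : ℤ) - (r : ℤ)) - s (((j : ℕ) : ℤ) + (r : ℤ))) :=
            mul_le_mul_of_nonneg_left hcase.le (by positivity)
        _ ≤ ε' + (2 * K / δ₀) * (s (((j : ℕ) : ℤ) - (r : ℤ)) - s (((j : ℕ) : ℤ) + (r : ℤ))) :=
            le_add_of_nonneg_left hε'
  -- (c4) telescoping bound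
  have htel : ∑ j : Fin (min p q), (s (((j : ℕ) : ℤ) - (r : ℤ)) - s (((j : ℕ) : ℤ) + (r : ℤ)))
      ≤ 2 * (r : ℝ) * T := by
    have key : ∑ i ∈ Finset.range (min p q), s ((i : ℤ) - (r : ℤ))
        ≤ 2 * (r : ℝ) * T + ∑ i ∈ Finset.range (min p q), s ((i : ℤ) + (r : ℤ)) := by
      have hble : min (2 * r) (min p q) ≤ min p q := min_le_right _ _
      have hsplit : ∑ i ∈ Finset.range (min p q), s ((i : ℤ) - (r : ℤ))
          = (∑ i ∈ Finset.range (min (2 * r) (min p q)), s ((i : ℤ) - (r : ℤ)))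
            + ∑ i ∈ Finset.Ico (min (2 * r) (min p q)) (min p q), s ((i : ℤ) - (r : ℤ)) := by
        rw [Finset.range_eq_Ico, Finset.range_eq_Ico]
        exact (Finset.sum_Ico_consecutive (fun i : ℕ => s ((i : ℤ) - (r : ℤ))) (Nat.zero_le _) hble).symm
      have hb1 : (∑ i ∈ Finset.range (min (2 * r) (min p q)), s ((i : ℤ) - (r : ℤ)))
          ≤ 2 * (r : ℝ) * T := by
        calc (∑ i ∈ Finset.range (min (2 * r) (min p q)), s ((i : ℤ) - (r : ℤ)))
            ≤ ∑ _i ∈ Finset.range (min (2 * r) (min p q)), T :=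
              Finset.sum_le_sum fun i _ => capSeq_le Bm hT.le _
          _ = ((min (2 * r) (min p q) : ℕ) : ℝ) * T := by
              rw [Finset.sum_const, Finset.card_range, nsmul_eq_mul]
          _ ≤ 2 * (r : ℝ) * T := by
              apply mul_le_mul_of_nonneg_right _ hT.le
              have h := min_le_left (2 * r) (min p q)
              exact_mod_cast h
      have hb2 : ∑ i ∈ Finset.Ico (min (2 * r) (min p q)) (min p q), s ((i : ℤ) - (r : ℤ))
          ≤ ∑ i ∈ Finset.range (min p q), s ((i : ℤ) + (r : ℤ)) := by
        by_cases hcase : 2 * r ≤ min p q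
        · rw [min_eq_left hcase, Finset.sum_Ico_eq_sum_range]
          have heq : ∀ i ∈ Finset.range (min p q - 2 * r),
              s (((2 * r + i : ℕ) : ℤ) - (r : ℤ)) = s ((i : ℤ) + (r : ℤ)) := by
            intro i _
            congr 1
            push_cast
            ring
          rw [Finset.sum_congr rfl heq]
          apply Finset.sum_le_sum_of_subset_of_nonneg
          · exact Finset.range_subset_range.mpr (by omega)
          · exact fun i _ _ => capSeq_nonneg Bm hT.le _
        · rw [min_eq_right (by omega), Finset.Ico_self, Finset.sum_empty]
          exact Finset.sum_nonneg fun i _ => capSeq_nonneg Bm hT.le _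
      rw [hsplit]
      linarith
    have hsum : ∑ j : Fin (min p q), (s (((j : ℕ) : ℤ) - (r : ℤ)) - s (((j : ℕ) : ℤ) + (r : ℤ)))
        = (∑ i ∈ Finset.range (min p q), s ((i : ℤ) - (r : ℤ)))
          - ∑ i ∈ Finset.range (min p q), s ((i : ℤ) + (r : ℤ)) := by
      rw [← Finset.sum_sub_distrib]
      exact Fin.sum_univ_eq_sum_range (fun i => s ((i : ℤ) - (r : ℤ)) - s ((i : ℤ) + (r : ℤ))) _
    rw [hsum]
    linarith
  -- (c5) conclusion
  calc |∑ j, F (singVals A j) - ∑ j, F (singVals Bm j)|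
      = |∑ j : Fin (min p q), (F (singVals A j) - F (singVals Bm j))| := by
        rw [Finset.sum_sub_distrib]
    _ ≤ ∑ j : Fin (min p q), |F (singVals A j) - F (singVals Bm j)| :=
        Finset.abs_sum_le_sum_abs _ _
    _ ≤ ∑ j : Fin (min p q),
          (ε' + (2 * K / δ₀) * (s (((j : ℕ) : ℤ) - (r : ℤ)) - s (((j : ℕ) : ℤ) + (r : ℤ)))) :=
        Finset.sum_le_sum fun j _ => hFbound j
    _ = ((min p q : ℕ) : ℝ) * ε'
          + (2 * K / δ₀) * ∑ j : Fin (min p q),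
              (s (((j : ℕ) : ℤ) - (r : ℤ)) - s (((j : ℕ) : ℤ) + (r : ℤ))) := by
        rw [Finset.sum_add_distrib, Finset.sum_const, Finset.card_univ, Fintype.card_fin,
          nsmul_eq_mul, ← Finset.mul_sum]
    _ ≤ ((min p q : ℕ) : ℝ) * ε' + (2 * K / δ₀) * (2 * (r : ℝ) * T) := by
        have := mul_le_mul_of_nonneg_left htel (by positivity : (0:ℝ) ≤ 2 * K / δ₀)
        linarith

end analysis

/-- If `{{B_{n,t}}}_{t>0}` is an a.c.s. for `{A_n}` and for every test
function `F` the singular-value means of `B_{n,t}` converge (in `n`) to `α_t(F)`, and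
`α_t(F) → α(F)` as `t → ∞`, then the singular-value means of `A_n` converge to `α(F)`. -/
theorem acs_singular_value_means_limit
    (d d' : ℕ → ℕ) (hd : StrictMono d) (hd' : StrictMono d')
    (A : (n : ℕ) → Matrix (Fin (d n)) (Fin (d' n)) ℂ)
    (B : ℝ → (n : ℕ) → Matrix (Fin (d n)) (Fin (d' n)) ℂ)
    (hacs : IsACS d d' A B)
    (α : ℝ → (ℝ → ℝ) → ℝ) (αlim : (ℝ → ℝ) → ℝ)
    (hαt : ∀ t : ℝ, 0 < t → ∀ F : ℝ → ℝ, Continuous F → HasCompactSupport F →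
      Tendsto (fun n : ℕ => (1 / ((min (d n) (d' n) : ℕ) : ℝ)) *
        ∑ j, F (singVals (B t n) j)) atTop (𝓝 (α t F)))
    (hα : ∀ F : ℝ → ℝ, Continuous F → HasCompactSupport F →
      Tendsto (fun t : ℝ => α t F) atTop (𝓝 (αlim F)))
    (F : ℝ → ℝ) (hF : Continuous F) (hFc : HasCompactSupport F) :
    Tendsto (fun n : ℕ => (1 / ((min (d n) (d' n) : ℕ) : ℝ)) *
      ∑ j, F (singVals (A n) j)) atTop (𝓝 (αlim F)) := by
  obtain ⟨nt, c, ω, hc, hω, hdecomp⟩ := hacs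
  -- a uniform bound for F
  obtain ⟨K0, hK0⟩ := hFc.exists_bound_of_continuous hF
  set K : ℝ := max K0 1 with hKdef
  have hK : ∀ x, |F x| ≤ K := fun x =>
    le_trans (by simpa [Real.norm_eq_abs] using hK0 x) (le_max_left _ _)
  have hK1 : (1:ℝ) ≤ K := le_max_right _ _
  have hKpos : (0:ℝ) < K := lt_of_lt_of_le one_pos hK1
  -- a support radius for F
  obtain ⟨T0, hT0⟩ := hFc.isBounded.subset_ball (0 : ℝ)
  set T : ℝ := max T0 1 with hTdef
  have hT : 0 < T := lt_of_lt_of_le one_pos (le_max_right _ _)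
  have hTF : ∀ x, T ≤ x → F x = 0 := by
    intro x hx
    apply image_eq_zero_of_notMem_tsupport
    intro hmem
    have h1 := hT0 hmem
    rw [Metric.mem_ball, Real.dist_eq, sub_zero] at h1
    have h2 : x < T0 := lt_of_abs_lt h1
    have h3 : T0 ≤ T := le_max_left _ _
    linarith
  -- uniform continuity
  have hunif : UniformContinuous F :=
    hF.uniformContinuous_of_tendsto_cocompact hFc.is_zero_at_infty
  rw [Metric.tendsto_atTop]
  intro ε hε
  set ε' : ℝ := ε / 5 with hε'def
  have hε'pos : 0 < ε' := by positivity
  obtain ⟨δ1, hδ1pos, hδ1⟩ := Metric.uniformContinuous_iff.mp hunif ε' hε'pos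
  set δ₀ : ℝ := δ1 / 3 with hδ₀def
  have hδ₀ : 0 < δ₀ := by positivity
  have hmod : ∀ x y : ℝ, |x - y| ≤ 2 * δ₀ → |F x - F y| ≤ ε' := by
    intro x y h
    have hd : dist x y < δ1 := by rw [Real.dist_eq]; linarith
    have := hδ1 hd
    rw [Real.dist_eq] at this
    exact this.le
  -- choose t
  have hev1 : ∀ᶠ t in atTop, c t < ε' * δ₀ / (4 * K * T) :=
    hc.eventually_lt_const (by positivity)
  have hev2 : ∀ᶠ t in atTop, ω t < δ₀ := hω.eventually_lt_const hδ₀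
  have hev3 : ∀ᶠ t in atTop, dist (α t F) (αlim F) < ε' := by
    have h := hα F hF hFc
    rw [Metric.tendsto_nhds] at h
    exact h ε' hε'pos
  obtain ⟨t, ht, hct, hωt, hαt'⟩ :=
    ((eventually_gt_atTop (0:ℝ)).and (hev1.and (hev2.and hev3))).exists
  -- limit in n for B at this t
  obtain ⟨N₀, hN₀⟩ := Metric.tendsto_atTop.mp (hαt t ht F hF hFc) ε' hε'pos
  refine ⟨max N₀ (nt t + 1), fun n hn => ?_⟩
  have hn1 : N₀ ≤ n := le_trans (le_max_left _ _) hn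
  have hn2 : nt t < n := lt_of_lt_of_le (Nat.lt_of_lt_of_le (Nat.lt_succ_self _) (le_max_right N₀ (nt t + 1))) hn
  obtain ⟨R, N, hdec, hrank, hNspec⟩ := hdecomp t ht n hn2
  have hm1 : 1 ≤ min (d n) (d' n) := by
    have h1 : n ≤ d n := hd.le_apply
    have h2 : n ≤ d' n := hd'.le_apply
    have h3 : 1 ≤ n := le_trans (le_trans (Nat.succ_le_succ (Nat.zero_le _)) (le_max_right N₀ (nt t + 1))) hn
    omega
  set m : ℕ := min (d n) (d' n) with hmdef
  have hmpos : (0:ℝ) < (m:ℝ) := by exact_mod_cast hm1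
  -- core estimate
  have hcore := sum_F_singVals_diff_le (B t n) R N F K T δ₀ ε' (ω t)
    hK hT hTF hδ₀ hε'pos.le hmod hNspec hωt.le
  rw [← hdec] at hcore
  -- divide by m
  have hdiff : |(1 / (m:ℝ)) * ∑ j, F (singVals (A n) j)
      - (1 / (m:ℝ)) * ∑ j, F (singVals (B t n) j)| ≤ 2 * ε' := by
    have heq : (1 / (m:ℝ)) * ∑ j, F (singVals (A n) j)
        - (1 / (m:ℝ)) * ∑ j, F (singVals (B t n) j)
        = (1 / (m:ℝ)) * (∑ j, F (singVals (A n) j) - ∑ j, F (singVals (B t n) j)) := by ring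
    rw [heq, abs_mul, abs_of_pos (by positivity : (0:ℝ) < 1 / (m:ℝ))]
    have hstep : (1 / (m:ℝ)) * |∑ j, F (singVals (A n) j) - ∑ j, F (singVals (B t n) j)|
        ≤ (1 / (m:ℝ)) * ((m:ℝ) * ε' + (2 * K / δ₀) * (2 * (R.rank : ℝ) * T)) :=
      mul_le_mul_of_nonneg_left hcore (by positivity)
    have hrank' : (2 * K / δ₀) * (2 * (R.rank : ℝ) * T)
        ≤ (2 * K / δ₀) * (2 * (c t * (m:ℝ)) * T) := by
      apply mul_le_mul_of_nonneg_left _ (by positivity)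
      apply mul_le_mul_of_nonneg_right _ hT.le
      linarith
    have hct' : (2 * K / δ₀) * (2 * (c t * (m:ℝ)) * T) ≤ (m:ℝ) * ε' := by
      have hc0 : c t ≤ ε' * δ₀ / (4 * K * T) := hct.le
      have key : (2 * K / δ₀) * (2 * ((ε' * δ₀ / (4 * K * T)) * (m:ℝ)) * T) = (m:ℝ) * ε' := by
        field_simp
        ring
      calc (2 * K / δ₀) * (2 * (c t * (m:ℝ)) * T)
          ≤ (2 * K / δ₀) * (2 * ((ε' * δ₀ / (4 * K * T)) * (m:ℝ)) * T) := by
            apply mul_le_mul_of_nonneg_left _ (by positivity)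
            apply mul_le_mul_of_nonneg_right _ hT.le
            have : c t * (m:ℝ) ≤ (ε' * δ₀ / (4 * K * T)) * (m:ℝ) :=
              mul_le_mul_of_nonneg_right hc0 hmpos.le
            linarith
        _ = (m:ℝ) * ε' := key
    calc (1 / (m:ℝ)) * |∑ j, F (singVals (A n) j) - ∑ j, F (singVals (B t n) j)|
        ≤ (1 / (m:ℝ)) * ((m:ℝ) * ε' + (2 * K / δ₀) * (2 * (R.rank : ℝ) * T)) := hstep
      _ ≤ (1 / (m:ℝ)) * ((m:ℝ) * ε' + (m:ℝ) * ε') := by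
          apply mul_le_mul_of_nonneg_left _ (by positivity)
          linarith
      _ = 2 * ε' := by field_simp; ring
  -- combine
  have hBdist : dist ((1 / (m:ℝ)) * ∑ j, F (singVals (B t n) j)) (α t F) < ε' := hN₀ n hn1
  rw [Real.dist_eq] at hBdist hαt' ⊢
  have htri : |(1 / (m:ℝ)) * ∑ j, F (singVals (A n) j) - αlim F|
      ≤ |(1 / (m:ℝ)) * ∑ j, F (singVals (A n) j) - (1 / (m:ℝ)) * ∑ j, F (singVals (B t n) j)|
        + |(1 / (m:ℝ)) * ∑ j, F (singVals (B t n) j) - α t F|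
        + |α t F - αlim F| := by
    have := abs_sub_le ((1 / (m:ℝ)) * ∑ j, F (singVals (A n) j))
      ((1 / (m:ℝ)) * ∑ j, F (singVals (B t n) j)) (αlim F)
    have h2 := abs_sub_le ((1 / (m:ℝ)) * ∑ j, F (singVals (B t n) j)) (α t F) (αlim F)
    linarith
  calc |(1 / (m:ℝ)) * ∑ j, F (singVals (A n) j) - αlim F|
      ≤ _ := htri
    _ < 2 * ε' + ε' + ε' := by
        apply add_lt_add_of_lt_of_lt (add_lt_add_of_le_of_lt hdiff hBdist) hαt'
    _ < ε := by rw [hε'def]; linarith
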